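/- arXiv:math-ph/0212029 — 4 statements merged into one kernel-verified Lean document; each statement's English description precedes it below -/
import Mathlib

section
/- Let G be an orthogonal projection on a complex inner product space, φ a nonzero vector, and ψ any vector orthogonal to φ. Then |⟨ψ, G φ⟩|² ≤ ‖ψ‖² ‖φ‖² ⟨G⟩_φ (1 - ⟨G⟩_φ), where ⟨G⟩_φ = ⟨φ, G φ⟩/‖φ‖². -/
open scoped InnerProductSpace

theorem projection_overlap_bound
    {E : Type*} [NormedAddCommGroup E] [InnerProductSpace ℂ E]
    (G : E →ₗ[ℂ] E) (hsymm : G.IsSymmetric) (hidem : G ∘ₗ G = G)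
    (φ : E) (hφ : φ ≠ 0) (ψ : E) (hperp : ⟪ψ, φ⟫_ℂ = 0) :
    ‖⟪ψ, G φ⟫_ℂ‖ ^ 2 ≤
      ‖ψ‖^2 * ‖φ‖^2 * ((⟪φ, G φ⟫_ℂ).re / ‖φ‖^2) *
        (1 - (⟪φ, G φ⟫_ℂ).re / ‖φ‖^2) := by
  have hn : (0:ℝ) < ‖φ‖^2 := pow_pos (norm_pos_iff.mpr hφ) 2
  set n : ℝ := ‖φ‖^2 with hn_def
  set r : ℝ := ‖G φ‖^2 with hr_def
  have har : (0:ℝ) ≤ r := by positivity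
  have hGG : G (G φ) = G φ := by
    have := congrArg (fun f => f φ) hidem
    simpa using this
  have hr : ⟪φ, G φ⟫_ℂ = (r : ℂ) := by
    calc ⟪φ, G φ⟫_ℂ = ⟪φ, G (G φ)⟫_ℂ := by rw [hGG]
      _ = ⟪G φ, G φ⟫_ℂ := (hsymm φ (G φ)).symm
      _ = (r : ℂ) := by
          rw [@inner_self_eq_norm_sq_to_K ℂ]
          norm_cast
  have hre : (⟪φ, G φ⟫_ℂ).re = r := by rw [hr]; simp
  set a : ℂ := ((r/n : ℝ) : ℂ) with ha_def
  set w : E := G φ - a • φ with hw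
  have hψw : ⟪ψ, G φ⟫_ℂ = ⟪ψ, w⟫_ℂ := by
    rw [hw, inner_sub_right, inner_smul_right, hperp]; ring
  have hGφφ : ⟪G φ, φ⟫_ℂ = (r : ℂ) := by
    rw [← inner_conj_symm, hr]; simp
  have hwnorm : ‖w‖^2 = r - r^2/n := by
    have hns : ‖w‖^2 = ‖G φ‖^2 - 2 * Complex.re ⟪G φ, a • φ⟫_ℂ + ‖a • φ‖^2 := by
      rw [hw]
      exact (@norm_sub_sq ℂ E _ _ _ (G φ) (a • φ))
    have h2 : Complex.re ⟪G φ, a • φ⟫_ℂ = r/n * r := by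
      rw [inner_smul_right, hGφφ, ha_def]
      push_cast
      simp
    have h3 : ‖a • φ‖^2 = (r/n)^2 * n := by
      rw [norm_smul, mul_pow, ha_def]
      have : ‖((r/n : ℝ) : ℂ)‖ = r/n := by
        rw [Complex.norm_real]; exact Real.norm_of_nonneg (by positivity)
      rw [this, hn_def]
    rw [hns, h2, h3, ← hr_def]
    field_simp
    ring
  have hcs : ‖⟪ψ, w⟫_ℂ‖ ≤ ‖ψ‖ * ‖w‖ := norm_inner_le_norm ψ w
  have key : ‖⟪ψ, G φ⟫_ℂ‖ ^ 2 ≤ ‖ψ‖^2 * (r - r^2/n) := by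
    rw [hψw, ← hwnorm]
    calc ‖⟪ψ, w⟫_ℂ‖ ^ 2 = ‖⟪ψ, w⟫_ℂ‖^2 := rfl
      _ ≤ (‖ψ‖ * ‖w‖)^2 := by
          apply pow_le_pow_left₀ (norm_nonneg _) hcs
      _ = ‖ψ‖^2 * ‖w‖^2 := by ring
  rw [hre]
  calc ‖⟪ψ, G φ⟫_ℂ‖ ^ 2 ≤ ‖ψ‖^2 * (r - r^2/n) := key
    _ = ‖ψ‖^2 * n * (r / n) * (1 - r / n) := by
        field_simp
end

section
/- Let 0 ≤ ε < 1/2, and set α = (√(1-ε) - √ε)² and β = √(1-ε)(√(1-ε) - √ε). Then for every η with 0 ≤ η ≤ ε and all real x, y, the bilinear form B(x,y) = (β - α + η)x² - 2√(η(1-η)) x y + (1 - η - β) y² is nonnegative. -/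
theorem bilinear_form_nonneg (ε : ℝ) (hε0 : 0 ≤ ε) (hε : ε < 1/2)
    (α β : ℝ)
    (hα : α = (Real.sqrt (1 - ε) - Real.sqrt ε)^2)
    (hβ : β = Real.sqrt (1 - ε) * (Real.sqrt (1 - ε) - Real.sqrt ε)) :
    ∀ η : ℝ, 0 ≤ η → η ≤ ε → ∀ x y : ℝ,
      0 ≤ (β - α + η) * x^2 - 2 * Real.sqrt (η * (1 - η)) * x * y
          + (1 - η - β) * y^2 := by
  intro η hη0 hηε x y
  have h1ε : (0:ℝ) ≤ 1 - ε := by linarith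
  set s := Real.sqrt (ε * (1 - ε)) with hs
  have hs0 : 0 ≤ s := Real.sqrt_nonneg _
  have hs2 : s ^ 2 = ε * (1 - ε) := Real.sq_sqrt (by nlinarith)
  have ha2 : Real.sqrt (1 - ε) ^ 2 = 1 - ε := Real.sq_sqrt h1ε
  have hb2 : Real.sqrt ε ^ 2 = ε := Real.sq_sqrt hε0
  have hab : Real.sqrt (1 - ε) * Real.sqrt ε = s := by
    rw [hs, mul_comm ε, ← Real.sqrt_mul h1ε]
  have hsε : ε ≤ s := by
    have : Real.sqrt (ε ^ 2) ≤ s := Real.sqrt_le_sqrt (by nlinarith)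
    rwa [Real.sqrt_sq hε0] at this
  have hA : β - α + η = s - ε + η := by rw [hα, hβ]; ring_nf; nlinarith [ha2, hb2, hab]
  have hC : 1 - η - β = s + ε - η := by rw [hβ]; nlinarith [ha2, hb2, hab]
  set A := s - ε + η with hAdef
  set C := s + ε - η with hCdef
  have hA0 : 0 ≤ A := by simp [hAdef]; linarith
  have hC0 : 0 ≤ C := by simp [hCdef]; linarith
  have hAC : η * (1 - η) ≤ A * C := by nlinarith [hs2]
  have hkey : Real.sqrt (η * (1 - η)) ≤ Real.sqrt A * Real.sqrt C := by
    rw [← Real.sqrt_mul hA0]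
    exact Real.sqrt_le_sqrt hAC
  have ht0 : 0 ≤ Real.sqrt (η * (1 - η)) := Real.sqrt_nonneg _
  have hA2 : Real.sqrt A ^ 2 = A := Real.sq_sqrt hA0
  have hC2 : Real.sqrt C ^ 2 = C := Real.sq_sqrt hC0
  rw [hA, hC]
  have e1 : A*x^2 - 2*Real.sqrt (η*(1-η))*x*y + C*y^2
      = (Real.sqrt A*x - Real.sqrt C*y)^2
        + 2*(Real.sqrt A*Real.sqrt C - Real.sqrt (η*(1-η)))*(x*y) := by
    linear_combination (-x^2)*hA2 + (-y^2)*hC2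
  have e2 : A*x^2 - 2*Real.sqrt (η*(1-η))*x*y + C*y^2
      = (Real.sqrt A*x + Real.sqrt C*y)^2
        - 2*(Real.sqrt A*Real.sqrt C - Real.sqrt (η*(1-η)))*(x*y)
        - 4*Real.sqrt (η*(1-η))*(x*y) := by
    linear_combination (-x^2)*hA2 + (-y^2)*hC2
  have hd : 0 ≤ Real.sqrt A*Real.sqrt C - Real.sqrt (η*(1-η)) := sub_nonneg.2 hkey
  show 0 ≤ A*x^2 - 2*Real.sqrt (η*(1-η))*x*y + C*y^2
  rcases le_or_gt 0 (x * y) with h | h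
  · rw [e1]
    have h1 := mul_nonneg hd h
    linarith [sq_nonneg (Real.sqrt A*x - Real.sqrt C*y)]
  · rw [e2]
    have h1 := mul_nonneg hd (le_of_lt (neg_pos.2 h))
    have h2 := mul_nonneg ht0 (le_of_lt (neg_pos.2 h))
    linarith [sq_nonneg (Real.sqrt A*x + Real.sqrt C*y)]
end

section
/- Let 0 ≤ ε < 1/2, α = (√(1-ε) - √ε)², β = √(1-ε)(√(1-ε) - √ε). Then the conditions for positivity hold: β - α + η ≥ 0, 1 - η - β ≥ 0, and η(1-η) ≤ (1 - η - β)(β - α + η) for all η ∈ [0, ε]. -/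
theorem positivity_conditions (ε : ℝ) (hε0 : 0 ≤ ε) (hε : ε < 1/2)
    (α β : ℝ)
    (hα : α = (Real.sqrt (1 - ε) - Real.sqrt ε)^2)
    (hβ : β = Real.sqrt (1 - ε) * (Real.sqrt (1 - ε) - Real.sqrt ε)) :
    ∀ η : ℝ, 0 ≤ η → η ≤ ε →
      0 ≤ β - α + η ∧ 0 ≤ 1 - η - β ∧
        η * (1 - η) ≤ (1 - η - β) * (β - α + η) := by
  intro η hη0 hηε
  set s := Real.sqrt ε with hs
  set t := Real.sqrt (1 - ε) with ht
  have hs0 : 0 ≤ s := Real.sqrt_nonneg _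
  have ht0 : 0 ≤ t := Real.sqrt_nonneg _
  have hs2 : s ^ 2 = ε := Real.sq_sqrt hε0
  have ht2 : t ^ 2 = 1 - ε := Real.sq_sqrt (by linarith)
  have hst : s ≤ t := Real.sqrt_le_sqrt (by linarith)
  refine ⟨?_, ?_, ?_⟩
  · nlinarith [mul_nonneg hs0 (sub_nonneg.mpr hst)]
  · nlinarith [mul_nonneg hs0 ht0]
  · nlinarith [mul_nonneg hs0 ht0, sq_nonneg (s*t), sq_nonneg (η - ε)]
end

section
/- Let G₁ and G₂ be orthogonal projections on a finite-dimensional Hilbert space, K = G₁G₂G₁, and let V = {ψ : G₁ψ = ψ, G₂ψ = ψ}. Then ε := sup{⟨ψ, G₂ψ⟩ : G₁ψ = ψ, ψ ⊥ V, ‖ψ‖ = 1} equals the largest eigenvalue of K that is strictly less than 1, provided such a ψ exists. -/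
open scoped InnerProductSpace

theorem epsilon_is_largest_eigenvalue_below_one
    {E : Type*} [NormedAddCommGroup E] [InnerProductSpace ℂ E]
    [FiniteDimensional ℂ E]
    (G₁ G₂ : E →L[ℂ] E)
    (h₁sa : IsSelfAdjoint G₁) (h₁idem : G₁ ∘L G₁ = G₁)
    (h₂sa : IsSelfAdjoint G₂) (h₂idem : G₂ ∘L G₂ = G₂)
    (K : E →L[ℂ] E) (hK : K = G₁ ∘L G₂ ∘L G₁)
    (V : Set E) (hV : V = {ψ : E | G₁ ψ = ψ ∧ G₂ ψ = ψ})
    (S : Set ℝ)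
    (hS : S = {x : ℝ | ∃ ψ : E, G₁ ψ = ψ ∧ (∀ v ∈ V, ⟪ψ, v⟫_ℂ = 0) ∧
        ‖ψ‖ = 1 ∧ x = (⟪ψ, G₂ ψ⟫_ℂ).re})
    (hne : S.Nonempty) :
    IsGreatest {μ : ℝ | μ < 1 ∧
        Module.End.HasEigenvalue (K : E →ₗ[ℂ] E) (μ : ℂ)} (sSup S) := by
  classical
  -- basic pointwise facts
  have h1app : ∀ y : E, G₁ (G₁ y) = G₁ y := by
    intro y
    have := ContinuousLinearMap.ext_iff.mp h₁idem y
    simpa using this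
  have h2app : ∀ y : E, G₂ (G₂ y) = G₂ y := by
    intro y
    have := ContinuousLinearMap.ext_iff.mp h₂idem y
    simpa using this
  have hKapp : ∀ y : E, K y = G₁ (G₂ (G₁ y)) := by
    intro y; rw [hK]; simp
  -- K is self-adjoint
  have hKsa : IsSelfAdjoint K := by
    have : K = G₁ * G₂ * G₁ := by rw [hK]; rw [mul_assoc]; rfl
    rw [this]
    exact h₂sa.conjugate_self h₁sa
  have hsym : ∀ x y : E, ⟪K x, y⟫_ℂ = ⟪x, K y⟫_ℂ := fun x y =>
    (ContinuousLinearMap.isSelfAdjoint_iff_isSymmetric.mp hKsa) x y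
  have h2sym : ∀ x y : E, ⟪G₂ x, y⟫_ℂ = ⟪x, G₂ y⟫_ℂ := fun x y =>
    (ContinuousLinearMap.isSelfAdjoint_iff_isSymmetric.mp h₂sa) x y
  have h1sym : ∀ x y : E, ⟪G₁ x, y⟫_ℂ = ⟪x, G₁ y⟫_ℂ := fun x y =>
    (ContinuousLinearMap.isSelfAdjoint_iff_isSymmetric.mp h₁sa) x y
  -- inner product with G₂ is a norm square
  have hinner2 : ∀ x : E, ⟪x, G₂ x⟫_ℂ = (‖G₂ x‖ ^ 2 : ℝ) := by
    intro x
    rw [← h2app x, ← h2sym, h2app]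
    rw [inner_self_eq_norm_sq_to_K]
    norm_num
  -- the Rayleigh value of K at G₁-fixed vectors
  have hKval : ∀ x : E, G₁ x = x → ⟪K x, x⟫_ℂ = (‖G₂ x‖ ^ 2 : ℝ) := by
    intro x hx
    have e : ⟪K x, x⟫_ℂ = ⟪G₂ x, G₂ x⟫_ℂ := by
      rw [hKapp, hx, h1sym, hx]
      conv_lhs => rw [← h2app x]
      exact h2sym (G₂ x) x
    rw [e, inner_self_eq_norm_sq_to_K]
    norm_num
  -- K fixes V pointwise
  have hKV : ∀ v ∈ V, K v = v := by
    intro v hv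
    rw [hV] at hv
    rw [hKapp, hv.1, hv.2, hv.1]
  -- the subspace W
  let W : Submodule ℂ E :=
    { carrier := {ψ : E | G₁ ψ = ψ ∧ ∀ v ∈ V, ⟪ψ, v⟫_ℂ = 0}
      add_mem' := by
        rintro a b ⟨ha1, ha2⟩ ⟨hb1, hb2⟩
        exact ⟨by rw [map_add, ha1, hb1], fun v hv => by
          rw [inner_add_left, ha2 v hv, hb2 v hv, add_zero]⟩
      zero_mem' := ⟨map_zero _, fun v _ => inner_zero_left v⟩
      smul_mem' := by
        rintro c a ⟨ha1, ha2⟩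
        exact ⟨by rw [map_smul, ha1], fun v hv => by
          rw [inner_smul_left, ha2 v hv, mul_zero]⟩ }
  have hWmem : ∀ ψ : E, ψ ∈ W ↔ G₁ ψ = ψ ∧ ∀ v ∈ V, ⟪ψ, v⟫_ℂ = 0 := fun _ => Iff.rfl
  -- K maps W to W
  have hmaps : ∀ x ∈ W, K x ∈ W := by
    intro x hx
    obtain ⟨hx1, hx2⟩ := (hWmem x).mp hx
    refine (hWmem _).mpr ⟨?_, ?_⟩
    · rw [hKapp, h1app]
    · intro v hv
      have : ⟪K x, v⟫_ℂ = ⟪x, v⟫_ℂ := by rw [hsym, hKV v hv]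
      rw [this]
      exact hx2 v hv
  have hmaps' : ∀ x ∈ W, (K : E →ₗ[ℂ] E) x ∈ W := hmaps
  -- the restricted operator
  set T : W →ₗ[ℂ] W := (K : E →ₗ[ℂ] E).restrict hmaps' with hT
  have hTapp : ∀ x : W, (T x : E) = K (x : E) := fun x => rfl
  have hTsym : T.IsSymmetric := by
    intro x y
    have : ⟪(T x : E), (y : E)⟫_ℂ = ⟪(x : E), (T y : E)⟫_ℂ := by
      rw [hTapp, hTapp, hsym]
    exact this
  -- nontriviality of W
  obtain ⟨s₀, hs₀⟩ := hne
  rw [hS] at hs₀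
  obtain ⟨ψ₀, hψ₀1, hψ₀2, hψ₀3, _⟩ := hs₀
  have hψ₀W : ψ₀ ∈ W := (hWmem ψ₀).mpr ⟨hψ₀1, hψ₀2⟩
  have hψ₀ne : (⟨ψ₀, hψ₀W⟩ : W) ≠ 0 := by
    intro h
    have : ψ₀ = 0 := congrArg Subtype.val h
    rw [this] at hψ₀3; simp at hψ₀3
  haveI : Nontrivial W := ⟨⟨⟨ψ₀, hψ₀W⟩, 0, hψ₀ne⟩⟩
  -- the eigenvalue from the Rayleigh quotient
  set μ₀ : ℝ := ⨆ x : { x : W // x ≠ 0 }, RCLike.re ⟪T x, (x : W)⟫_ℂ / ‖(x : W)‖ ^ 2 with hμ₀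
  have heig : Module.End.HasEigenvalue T (μ₀ : ℂ) :=
    hTsym.hasEigenvalue_iSup_of_finiteDimensional
  -- identify the Rayleigh range with S
  have hrange : Set.range (fun x : { x : W // x ≠ 0 } =>
      RCLike.re ⟪T x, (x : W)⟫_ℂ / ‖(x : W)‖ ^ 2) = S := by
    ext r
    constructor
    · rintro ⟨x, rfl⟩
      obtain ⟨hx1, hx2⟩ := (hWmem (x : W)).mp (x : W).2
      have hxne : ((x : W) : E) ≠ 0 := by
        intro h
        exact x.2 (Subtype.ext h)
      have hnx : ‖((x : W) : E)‖ ≠ 0 := norm_ne_zero_iff.mpr hxne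
      set ψ : E := (‖((x : W) : E)‖⁻¹ : ℂ) • ((x : W) : E) with hψdef
      have hψ1 : G₁ ψ = ψ := by rw [hψdef, map_smul, hx1]
      have hψ2 : ∀ v ∈ V, ⟪ψ, v⟫_ℂ = 0 := fun v hv => by
        rw [hψdef, inner_smul_left, hx2 v hv, mul_zero]
      have hψ3 : ‖ψ‖ = 1 := by
        rw [hψdef, norm_smul]
        simp [hnx]
      rw [hS]
      refine ⟨ψ, hψ1, hψ2, hψ3, ?_⟩
      dsimp only
      have e2 : ⟪T x, ((x : {x : W // x ≠ 0}) : W)⟫_ℂ = ⟪K ((x : W) : E), ((x : W) : E)⟫_ℂ := rfl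
      have hnw : ‖((x : W) : E)‖ = ‖(x : W)‖ := rfl
      have hG2 : ‖G₂ ψ‖ = ‖((x : W) : E)‖⁻¹ * ‖G₂ ((x : W) : E)‖ := by
        rw [hψdef, map_smul, norm_smul]
        simp
      rw [e2, hKval _ hx1, hinner2]
      simp only [RCLike.re_to_complex, Complex.ofReal_re]
      rw [hG2, ← hnw]
      field_simp
    · intro hr
      rw [hS] at hr
      obtain ⟨ψ, hψ1, hψ2, hψ3, hψ4⟩ := hr
      have hψW : ψ ∈ W := (hWmem ψ).mpr ⟨hψ1, hψ2⟩
      have hne' : (⟨ψ, hψW⟩ : W) ≠ 0 := by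
        intro h
        have : ψ = 0 := congrArg Subtype.val h
        rw [this] at hψ3; simp at hψ3
      refine ⟨⟨⟨ψ, hψW⟩, hne'⟩, ?_⟩
      dsimp only
      have e2 : ⟪T ⟨ψ, hψW⟩, (⟨ψ, hψW⟩ : W)⟫_ℂ = ⟪K ψ, ψ⟫_ℂ := rfl
      have hn : ‖(⟨ψ, hψW⟩ : W)‖ = 1 := hψ3
      rw [e2, hKval ψ hψ1, hn, hψ4, hinner2]
      simp
  have hμ₀S : μ₀ = sSup S := by
    rw [hμ₀, ← hrange]
    exact sSup_range.symm
  -- bounded above by 1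
  have hbound : ∀ x ∈ S, x ≤ 1 := by
    intro x hx
    rw [hS] at hx
    obtain ⟨ψ, hψ1, hψ2, hψ3, hψ4⟩ := hx
    have hcs := norm_inner_le_norm (𝕜 := ℂ) ψ (G₂ ψ)
    have h2 : ‖⟪ψ, G₂ ψ⟫_ℂ‖ = ‖G₂ ψ‖ ^ 2 := by
      rw [hinner2, Complex.norm_real, Real.norm_eq_abs, abs_of_nonneg (sq_nonneg ‖G₂ ψ‖)]
    rw [h2, hψ3, one_mul] at hcs
    rw [hψ4, hinner2]
    simp only [Complex.ofReal_re]
    nlinarith [norm_nonneg (G₂ ψ), sq_nonneg (‖G₂ ψ‖ - 1)]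
  have hbddS : BddAbove S := ⟨1, fun x hx => hbound x hx⟩
  -- extract eigenvector for μ₀
  obtain ⟨v, hv⟩ := heig.exists_hasEigenvector
  have hvne : (v : E) ≠ 0 := fun h => hv.2 (Subtype.ext h)
  have hvK : K (v : E) = (μ₀ : ℂ) • (v : E) := by
    have hT' : T v = (μ₀ : ℂ) • v := Module.End.mem_eigenspace_iff.mp hv.1
    calc K (v : E) = ((T v : W) : E) := (hTapp v).symm
    _ = (((μ₀ : ℂ) • v : W) : E) := by rw [hT']
    _ = (μ₀ : ℂ) • (v : E) := rfl
  have heigK : Module.End.HasEigenvalue (K : E →ₗ[ℂ] E) ((sSup S : ℝ) : ℂ) := by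
    rw [← hμ₀S]
    exact Module.End.hasEigenvalue_of_hasEigenvector
      ⟨Module.End.mem_eigenspace_iff.mpr hvK, hvne⟩
  obtain ⟨hv1, hv2⟩ := (hWmem (v : E)).mp v.2
  -- Rayleigh identity for v
  have hRay : (‖G₂ (v : E)‖ ^ 2 : ℝ) = μ₀ * ‖(v : E)‖ ^ 2 := by
    have e1 := hKval (v : E) hv1
    rw [hvK, inner_smul_left, Complex.conj_ofReal, inner_self_eq_norm_sq_to_K] at e1
    have e1' : μ₀ * ‖v‖ ^ 2 = ‖G₂ (v : E)‖ ^ 2 := by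
      simp only [Complex.coe_algebraMap] at e1
      exact_mod_cast e1
    exact e1'.symm
  have hsub : ‖(v : E) - G₂ (v : E)‖ ^ 2 = ‖(v : E)‖ ^ 2 - ‖G₂ (v : E)‖ ^ 2 := by
    have hre : RCLike.re ⟪(v : E), G₂ (v : E)⟫_ℂ = ‖G₂ (v : E)‖ ^ 2 := by
      rw [hinner2]
      simp [RCLike.re_to_complex, ← Complex.ofReal_pow]
    rw [@norm_sub_sq ℂ, hre]
    ring
  have hvpos : 0 < ‖(v : E)‖ := norm_pos_iff.mpr hvne
  -- sSup S < 1
  have hlt1 : μ₀ < 1 := by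
    by_contra hcon
    push_neg at hcon
    have hle : ‖G₂ (v : E)‖ ^ 2 ≤ ‖(v : E)‖ ^ 2 := by
      nlinarith [sq_nonneg ‖(v : E) - G₂ (v : E)‖]
    have hmu1 : μ₀ = 1 := by nlinarith [pow_pos hvpos 2]
    have h0 : ‖(v : E) - G₂ (v : E)‖ ^ 2 = 0 := by
      rw [hsub, hRay, hmu1]; ring
    have hG2v : G₂ (v : E) = (v : E) := by
      have := sq_eq_zero_iff.mp h0
      rw [norm_eq_zero, sub_eq_zero] at this
      exact this.symm
    have hvV : (v : E) ∈ V := by rw [hV]; exact ⟨hv1, hG2v⟩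
    have := hv2 (v : E) hvV
    rw [inner_self_eq_zero] at this
    exact hvne this
  constructor
  · exact ⟨hμ₀S ▸ hlt1, heigK⟩
  -- upper bound
  · intro μ hμ
    obtain ⟨hμlt, hμev⟩ := hμ
    obtain ⟨φ, hφ⟩ := hμev.exists_hasEigenvector
    have hφne : φ ≠ 0 := hφ.2
    have hφK : K φ = (μ : ℂ) • φ := Module.End.mem_eigenspace_iff.mp hφ.1
    by_cases hμ0 : μ = 0
    · have hs₀S : s₀ ∈ S := by
        rw [hS]
        exact ⟨ψ₀, hψ₀1, hψ₀2, hψ₀3, ‹s₀ = (⟪ψ₀, G₂ ψ₀⟫_ℂ).re›⟩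
      have h0 : (0 : ℝ) ≤ s₀ := by
        rw [‹s₀ = (⟪ψ₀, G₂ ψ₀⟫_ℂ).re›, hinner2, Complex.ofReal_re]
        positivity
      calc μ = 0 := hμ0
        _ ≤ s₀ := h0
        _ ≤ sSup S := le_csSup hbddS hs₀S
    · have hμC : ((μ : ℝ) : ℂ) ≠ 0 := by exact_mod_cast hμ0
      have hφ1 : G₁ φ = φ := by
        have h1 : G₁ (K φ) = K φ := by rw [hKapp, h1app]
        rw [hφK, map_smul] at h1
        exact smul_right_injective E hμC h1
      have hφ2 : ∀ v ∈ V, ⟪φ, v⟫_ℂ = 0 := by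
        intro v hv
        have h1 : ⟪K φ, v⟫_ℂ = ⟪φ, v⟫_ℂ := by rw [hsym, hKV v hv]
        rw [hφK, inner_smul_left, Complex.conj_ofReal] at h1
        have h2 : (((μ : ℝ) : ℂ) - 1) * ⟪φ, v⟫_ℂ = 0 := by linear_combination h1
        rcases mul_eq_zero.mp h2 with h | h
        · exfalso
          have hμ1 : ((μ : ℝ) : ℂ) = 1 := by linear_combination h
          have : μ = 1 := by exact_mod_cast hμ1
          exact absurd this (ne_of_lt hμlt)
        · exact h
      have hφpos : 0 < ‖φ‖ := norm_pos_iff.mpr hφne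
      set ψ : E := (‖φ‖⁻¹ : ℂ) • φ with hψdef
      have hψ1 : G₁ ψ = ψ := by rw [hψdef, map_smul, hφ1]
      have hψ2 : ∀ v ∈ V, ⟪ψ, v⟫_ℂ = 0 := fun v hv => by
        rw [hψdef, inner_smul_left, hφ2 v hv, mul_zero]
      have hψ3 : ‖ψ‖ = 1 := by
        rw [hψdef, norm_smul]
        simp [ne_of_gt hφpos]
      have hψK : K ψ = ((μ : ℝ) : ℂ) • ψ := by
        rw [hψdef, map_smul, hφK, smul_comm]
      have hval : (⟪ψ, G₂ ψ⟫_ℂ).re = μ := by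
        have e1 := hKval ψ hψ1
        have e2 : ⟪K ψ, ψ⟫_ℂ = ((μ : ℝ) : ℂ) := by
          rw [hψK, inner_smul_left, Complex.conj_ofReal, inner_self_eq_norm_sq_to_K, hψ3]
          norm_num
        rw [hinner2]
        have h3 : ((‖G₂ ψ‖ ^ 2 : ℝ) : ℂ) = ((μ : ℝ) : ℂ) := by rw [← e1, e2]
        have h4 : (‖G₂ ψ‖ ^ 2 : ℝ) = μ := by exact_mod_cast h3
        rw [h4]
        exact Complex.ofReal_re μ
      have hμS : μ ∈ S := by
        rw [hS]
        exact ⟨ψ, hψ1, hψ2, hψ3, hval.symm⟩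
      exact le_csSup hbddS hμS
end
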